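/- The maps σ, τ, ν are bijections of Φ⁵, and there is an injective group homomorphism ρ from the symmetric group S₅ into the group of bijections of Φ⁵ such that ρ((1 2 3 4 5)) = σ, ρ((1 5)(2 4)) = τ, and ρ((1 2)) = ν. In particular the subgroup of permutations of Φ⁵ generated by σ, τ, ν is isomorphic to S₅. -/

import Mathlib

set_option maxRecDepth 100000
set_option maxHeartbeats 1000000

/-! Slopes: `QInf = ℚ ∪ {∞}` with `none = ∞`; `Phi = ℚ ∪ {∞, ∅}` with outer `none = ∅`. -/

abbrev QInf := Option ℚ
abbrev Phi := Option QInf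

/-- The Möbius map `x ↦ (a·x + b)/(c·x + d)` extended projectively to `ℚ ∪ {∞}`. -/
def mob (a b c d : ℚ) : QInf → QInf
  | none => if c = 0 then none else some (a / c)
  | some x => if c * x + d = 0 then none else some ((a * x + b) / (c * x + d))

/-- The extension of a Möbius map to `Φ`, fixing the empty slope `∅`. -/
def mobP (a b c d : ℚ) : Phi → Phi := Option.map (mob a b c d)

/-- The nonempty finite slope `x ∈ ℚ`. -/
def sl (x : ℚ) : Phi := some (some x)
/-- The slope `∞`. -/
def inf : Phi := some none
/-- The empty slope `∅`. -/
def emp : Phi := none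

abbrev Phi5 := Fin 5 → Phi

/-- σ(α₁,α₂,α₃,α₄,α₅) = (α₅,α₁,α₂,α₃,α₄). -/
def sigmaMap (x : Phi5) : Phi5 := ![x 4, x 0, x 1, x 2, x 3]

/-- τ(α₁,α₂,α₃,α₄,α₅) = (α₅,α₄,α₃,α₂,α₁). -/
def tauMap (x : Phi5) : Phi5 := ![x 4, x 3, x 2, x 1, x 0]

/-- ν(α₁,α₂,α₃,α₄,α₅) = (1/α₂, 1/α₁, 1−α₃, α₄/(α₄−1), 1−α₅). -/
def nuMap (x : Phi5) : Phi5 :=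
  ![mobP 0 1 1 0 (x 1), mobP 0 1 1 0 (x 0), mobP (-1) 1 0 1 (x 2),
    mobP 1 0 1 (-1) (x 3), mobP (-1) 1 0 1 (x 4)]

/-! ### Auxiliary: composition of Möbius maps -/

lemma mob_comp (a b c d a' b' c' d' : ℚ) (h' : a' * d' - b' * c' ≠ 0)
    (x : QInf) :
    mob a b c d (mob a' b' c' d' x) =
      mob (a * a' + b * c') (a * b' + b * d') (c * a' + d * c') (c * b' + d * d') x := by
  cases x with
  | none =>
    by_cases hc' : c' = 0
    · have ha' : a' ≠ 0 := fun h0 => h' (by rw [h0, hc']; ring)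
      subst hc'
      simp only [mob, if_pos rfl]
      by_cases hc : c = 0
      · simp [mob, hc, ha']
      · have : c * a' + d * 0 ≠ 0 := by simpa using mul_ne_zero hc ha'
        simp only [mob, if_neg hc, if_neg this]
        rw [show (if True then (none:QInf) else some (a' / 0)) = none from rfl]
        simp only [if_neg hc]
        congr 1
        simp only [mul_zero, add_zero]
        rw [mul_div_mul_right _ _ ha']
    · simp only [mob, if_neg hc']
      have hden : c * (a' / c') + d = (c * a' + d * c') / c' := by field_simp
      have hnum : a * (a' / c') + b = (a * a' + b * c') / c' := by field_simp
      simp only [mob, hden, hnum, div_eq_zero_iff, hc', or_false]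
      split_ifs with h1
      · rfl
      · congr 1
        rw [div_div_div_cancel_right₀ hc']
  | some y =>
    by_cases hD : c' * y + d' = 0
    · have hN : a' * y + b' ≠ 0 := by
        intro h0
        apply h'
        have : a' * d' - b' * c' = a' * (c' * y + d') - c' * (a' * y + b') := by ring
        rw [this, hD, h0]; ring
      simp only [mob, if_pos hD]
      have hden : (c * a' + d * c') * y + (c * b' + d * d') = c * (a' * y + b') := by
        have : (c * a' + d * c') * y + (c * b' + d * d')
            = c * (a' * y + b') + d * (c' * y + d') := by ring
        rw [this, hD, mul_zero, add_zero]
      have hnum : (a * a' + b * c') * y + (a * b' + b * d') = a * (a' * y + b') := by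
        have : (a * a' + b * c') * y + (a * b' + b * d')
            = a * (a' * y + b') + b * (c' * y + d') := by ring
        rw [this, hD, mul_zero, add_zero]
      simp only [mob, hden, hnum, mul_eq_zero, hN, or_false]
      split_ifs with h1
      · rfl
      · congr 1
        rw [mul_div_mul_right _ _ hN]
    · simp only [mob, if_neg hD]
      have hden : c * ((a' * y + b') / (c' * y + d')) + d
          = ((c * a' + d * c') * y + (c * b' + d * d')) / (c' * y + d') := by
        rw [mul_div_assoc', div_add' _ _ _ hD]; ring
      have hnum : a * ((a' * y + b') / (c' * y + d')) + b
          = ((a * a' + b * c') * y + (a * b' + b * d')) / (c' * y + d') := by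
        rw [mul_div_assoc', div_add' _ _ _ hD]; ring
      simp only [mob, hden, hnum, div_eq_zero_iff, hD, or_false]
      split_ifs with h1
      · rfl
      · congr 1
        rw [div_div_div_cancel_right₀ hD]

lemma mobP_comp (a b c d a' b' c' d' : ℚ) (h' : a' * d' - b' * c' ≠ 0) :
    mobP a b c d ∘ mobP a' b' c' d' =
      mobP (a * a' + b * c') (a * b' + b * d') (c * a' + d * c') (c * b' + d * d') := by
  funext x
  cases x with
  | none => rfl
  | some y =>
    simp only [Function.comp_apply, mobP, Option.map_some]
    rw [mob_comp _ _ _ _ _ _ _ _ h']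

lemma mobP_id : mobP 1 0 0 1 = id := by
  funext x
  cases x with
  | none => rfl
  | some y =>
    cases y with
    | none => simp [mobP, mob]
    | some q => simp [mobP, mob]

lemma mobP_inv : mobP 0 (-1) (-1) 0 = mobP 0 1 1 0 := by
  funext x
  cases x with
  | none => rfl
  | some y =>
    cases y with
    | none => simp [mobP, mob]
    | some q =>
      simp only [mobP, mob, Option.map_some]
      by_cases hq : q = 0
      · simp [hq]
      · have h1 : (-1 : ℚ) * q + 0 ≠ 0 := by simpa using hq
        have h2 : (1 : ℚ) * q + 0 ≠ 0 := by simpa using hq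
        rw [if_neg h1, if_neg h2]
        congr 1
        ring

/-! ### The label cocycle from partitions of cusp complements -/

def mOff : Fin 3 → Fin 5 → Fin 5 := fun k d =>
  if k = 0 then -d
  else if k = 1 then
    (if d = 1 then 3 else if d = 2 then 4 else if d = 3 then 1 else if d = 4 then 2 else 0)
  else (if d = 1 then 2 else if d = 2 then 1 else if d = 3 then 4 else if d = 4 then 3 else 0)

def encFun (i : Fin 5) (k : Fin 3) (j : Fin 5) : Fin 5 := if j = i then i else i + mOff k (j - i)

lemma enc_invol : ∀ (i : Fin 5) (k : Fin 3) (j : Fin 5), encFun i k (encFun i k j) = j := by decide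

/-- The involution of `Fin 5` fixing `i` and pairing the other four elements according to
the pattern `k` (the three `2+2`-partitions of the complement of the cusp `i`). -/
def enc (i : Fin 5) (k : Fin 3) : Equiv.Perm (Fin 5) :=
  ⟨encFun i k, encFun i k, enc_invol i k, enc_invol i k⟩

/-- The label of a `2+2`-involution fixing `i`, read off from the image of `i+1`. -/
def labFun (t : Equiv.Perm (Fin 5)) (i : Fin 5) : Fin 3 :=
  if t (i + 1) - i = 4 then 0 else if t (i + 1) - i = 3 then 1 else 2

lemma invol_classify : ∀ (t : Equiv.Perm (Fin 5)) (i : Fin 5),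
    t * t = 1 → t i = i → (∀ j, j ≠ i → t j ≠ j) → t = enc i (labFun t i) := by decide

lemma enc_mul_self (i : Fin 5) (k : Fin 3) : enc i k * enc i k = 1 :=
  Equiv.ext fun j => enc_invol i k j

lemma enc_apply_self : ∀ (i : Fin 5) (k : Fin 3), enc i k i = i := by decide

lemma enc_ne : ∀ (i : Fin 5) (k : Fin 3) (j : Fin 5), j ≠ i → enc i k j ≠ j := by decide

lemma enc_inj : ∀ (i : Fin 5) (k k' : Fin 3), enc i k = enc i k' → k = k' := by decide

/-- The label cocycle: how `p` transports the partition labelled `k` at cusp `p⁻¹ i`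
to a partition at cusp `i`. -/
def cf (p : Equiv.Perm (Fin 5)) (i : Fin 5) (k : Fin 3) : Fin 3 :=
  labFun (p * enc (p⁻¹ i) k * p⁻¹) i

lemma key (p : Equiv.Perm (Fin 5)) (i : Fin 5) (k : Fin 3) :
    p * enc (p⁻¹ i) k * p⁻¹ = enc i (cf p i k) := by
  apply invol_classify
  · calc p * enc (p⁻¹ i) k * p⁻¹ * (p * enc (p⁻¹ i) k * p⁻¹)
        = p * (enc (p⁻¹ i) k * enc (p⁻¹ i) k) * p⁻¹ := by group
      _ = 1 := by rw [enc_mul_self]; group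
  · simp [Equiv.Perm.mul_apply, enc_apply_self]
  · intro j hj
    simp only [Equiv.Perm.mul_apply]
    intro hcon
    have h1 : enc (p⁻¹ i) k (p⁻¹ j) = p⁻¹ j := by
      have := congrArg (⇑p⁻¹) hcon
      simpa using this
    exact enc_ne (p⁻¹ i) k (p⁻¹ j) (fun h => hj (by simpa using congrArg p h)) h1

lemma cf_one : ∀ (i : Fin 5) (k : Fin 3), cf 1 i k = k := by decide

lemma cf_mul (p q : Equiv.Perm (Fin 5)) (i : Fin 5) (k : Fin 3) :
    cf (p * q) i k = cf p i (cf q (p⁻¹ i) k) := by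
  apply enc_inj i
  rw [← key (p * q) i k, ← key p i _, ← key q (p⁻¹ i) k]
  rw [show (p * q)⁻¹ i = q⁻¹ (p⁻¹ i) by simp]
  group

/-- The label cocycle, packaged as a permutation of the three labels. -/
def C (p : Equiv.Perm (Fin 5)) (i : Fin 5) : Equiv.Perm (Fin 3) :=
  ⟨cf p i, cf p⁻¹ (p⁻¹ i), fun k => by
      have h := cf_mul p⁻¹ p (p⁻¹ i) k
      rw [inv_mul_cancel, cf_one] at h
      rw [show p⁻¹⁻¹ (p⁻¹ i) = i by simp] at h
      exact h.symm,
   fun k => by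
      have h := cf_mul p p⁻¹ i k
      rw [mul_inv_cancel, cf_one] at h
      exact h.symm⟩

lemma C_mul (p q : Equiv.Perm (Fin 5)) (i : Fin 5) :
    C (p * q) i = C p i * C q (p⁻¹ i) :=
  Equiv.ext fun k => cf_mul p q i k

lemma C_one (i : Fin 5) : C 1 i = 1 :=
  Equiv.ext fun k => cf_one i k

/-! ### The anharmonic (matrix) table -/

abbrev Quad := ℤ × ℤ × ℤ × ℤ

def Mtab : Fin 3 → Fin 3 → Quad := fun u v =>
  if u = 0 then (if v = 1 then (1,0,0,1) else (1,0,1,-1))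
  else if u = 1 then (if v = 0 then (-1,1,0,1) else (0,-1,1,-1))
  else (if v = 1 then (0,-1,-1,0) else (-1,1,-1,0))

def qmul : Quad → Quad → Quad := fun (a,b,c,d) (a',b',c',d') =>
  (a * a' + b * c', a * b' + b * d', c * a' + d * c', c * b' + d * d')

lemma Mtab_mul : ∀ g h : Equiv.Perm (Fin 3),
    Mtab ((g * h) 0) ((g * h) 1) = qmul (Mtab (g 0) (g 1)) (Mtab (h 0) (h 1)) := by decide

lemma Mtab_det : ∀ u v : Fin 3,
    (Mtab u v).1 * (Mtab u v).2.2.2 - (Mtab u v).2.1 * (Mtab u v).2.2.1 ≠ 0 := by decide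

/-- The Möbius map attached to an integer quadruple. -/
def mobZ (A : Quad) : Phi → Phi := mobP (A.1 : ℚ) (A.2.1 : ℚ) (A.2.2.1 : ℚ) (A.2.2.2 : ℚ)

lemma mobZ_comp (A B : Quad) (hB : B.1 * B.2.2.2 - B.2.1 * B.2.2.1 ≠ 0) :
    mobZ A ∘ mobZ B = mobZ (qmul A B) := by
  obtain ⟨a, b, c, d⟩ := A
  obtain ⟨a', b', c', d'⟩ := B
  have hB' : (a' : ℚ) * (d' : ℚ) - (b' : ℚ) * (c' : ℚ) ≠ 0 := by
    exact_mod_cast hB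
  simp only [mobZ, qmul]
  rw [mobP_comp _ _ _ _ _ _ _ _ hB']
  push_cast
  rfl

/-- The per-cusp Möbius twist associated with a label-permutation. -/
def thetaF (g : Equiv.Perm (Fin 3)) : Phi → Phi := mobZ (Mtab (g 0) (g 1))

lemma thetaF_mul (g h : Equiv.Perm (Fin 3)) : thetaF (g * h) = thetaF g ∘ thetaF h := by
  rw [thetaF, Mtab_mul, ← mobZ_comp _ _ (Mtab_det (h 0) (h 1))]
  rfl

lemma thetaF_one : thetaF 1 = id := by
  have h1 : Mtab ((1 : Equiv.Perm (Fin 3)) 0) ((1 : Equiv.Perm (Fin 3)) 1) = (1,0,0,1) := rfl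
  rw [thetaF, h1]
  show mobP ((1:ℤ):ℚ) ((0:ℤ):ℚ) ((0:ℤ):ℚ) ((1:ℤ):ℚ) = id
  norm_num [mobP_id]

/-! ### The representation ρ -/

def rhoFun (p : Equiv.Perm (Fin 5)) (x : Phi5) : Phi5 :=
  fun i => thetaF (C p i) (x (p⁻¹ i))

lemma rhoFun_mul (p q : Equiv.Perm (Fin 5)) (x : Phi5) :
    rhoFun (p * q) x = rhoFun p (rhoFun q x) := by
  funext i
  simp only [rhoFun, C_mul, thetaF_mul, Function.comp_apply, mul_inv_rev,
    Equiv.Perm.mul_apply]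

lemma rhoFun_one (x : Phi5) : rhoFun 1 x = x := by
  funext i
  simp [rhoFun, C_one, thetaF_one]

/-- ρ as a permutation of `Φ⁵`. -/
def rhoE (p : Equiv.Perm (Fin 5)) : Equiv.Perm Phi5 :=
  ⟨rhoFun p, rhoFun p⁻¹,
   fun x => by rw [← rhoFun_mul, inv_mul_cancel, rhoFun_one],
   fun x => by rw [← rhoFun_mul, mul_inv_cancel, rhoFun_one]⟩

/-- ρ as a group homomorphism `S₅ → Perm(Φ⁵)`. -/
def rho : Equiv.Perm (Fin 5) →* Equiv.Perm Phi5 :=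
  MonoidHom.mk' rhoE (fun p q => Equiv.ext fun x => rhoFun_mul p q x)

/-! ### Values on the generators -/

lemma thetaF_eval_01 : mobZ (Mtab 0 1) = id := by
  have h1 : Mtab 0 1 = (1,0,0,1) := rfl
  rw [h1]
  show mobP ((1:ℤ):ℚ) ((0:ℤ):ℚ) ((0:ℤ):ℚ) ((1:ℤ):ℚ) = id
  norm_num [mobP_id]

lemma thetaF_eval_21 : mobZ (Mtab 2 1) = mobP 0 1 1 0 := by
  have h1 : Mtab 2 1 = (0,-1,-1,0) := rfl
  rw [h1]
  show mobP ((0:ℤ):ℚ) ((-1:ℤ):ℚ) ((-1:ℤ):ℚ) ((0:ℤ):ℚ) = mobP 0 1 1 0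
  norm_num [mobP_inv]

lemma thetaF_eval_10 : mobZ (Mtab 1 0) = mobP (-1) 1 0 1 := by
  have h1 : Mtab 1 0 = (-1,1,0,1) := rfl
  rw [h1]
  show mobP ((-1:ℤ):ℚ) ((1:ℤ):ℚ) ((0:ℤ):ℚ) ((1:ℤ):ℚ) = mobP (-1) 1 0 1
  norm_num

lemma thetaF_eval_02 : mobZ (Mtab 0 2) = mobP 1 0 1 (-1) := by
  have h1 : Mtab 0 2 = (1,0,1,-1) := rfl
  rw [h1]
  show mobP ((1:ℤ):ℚ) ((0:ℤ):ℚ) ((1:ℤ):ℚ) ((-1:ℤ):ℚ) = mobP 1 0 1 (-1)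
  norm_num

def rot5 : Equiv.Perm (Fin 5) := ⟨fun i => i + 1, fun i => i - 1, by decide, by decide⟩

lemma fr_eq : finRotate 5 = rot5 := by
  ext i; fin_cases i <;> rfl

def tau5 : Equiv.Perm (Fin 5) := Equiv.swap 0 4 * Equiv.swap 1 3
def nu5 : Equiv.Perm (Fin 5) := Equiv.swap 0 1

lemma rho_apply (p : Equiv.Perm (Fin 5)) (x : Phi5) (i : Fin 5) :
    (rho p) x i = thetaF (C p i) (x (p⁻¹ i)) := rfl

lemma thetaF_def (g : Equiv.Perm (Fin 3)) : thetaF g = mobZ (Mtab (g 0) (g 1)) := rfl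

lemma C_apply (p : Equiv.Perm (Fin 5)) (i : Fin 5) (k : Fin 3) : (C p i) k = cf p i k := rfl

lemma rho_sigma : ⇑(rho (finRotate 5)) = sigmaMap := by
  rw [fr_eq]
  funext x i
  rw [rho_apply, thetaF_def, C_apply, C_apply]
  have h0 : ∀ i : Fin 5, cf rot5 i 0 = 0 ∧ cf rot5 i 1 = 1 := by decide
  rw [(h0 i).1, (h0 i).2, thetaF_eval_01]
  fin_cases i <;> rfl

lemma rho_tau : ⇑(rho tau5) = tauMap := by
  funext x i
  rw [rho_apply, thetaF_def, C_apply, C_apply]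
  have h0 : ∀ i : Fin 5, cf tau5 i 0 = 0 ∧ cf tau5 i 1 = 1 := by decide
  rw [(h0 i).1, (h0 i).2, thetaF_eval_01]
  fin_cases i <;> rfl

lemma rho_nu : ⇑(rho nu5) = nuMap := by
  funext x i
  rw [rho_apply, thetaF_def, C_apply, C_apply]
  fin_cases i
  · show mobZ (Mtab (cf nu5 0 0) (cf nu5 0 1)) (x (nu5⁻¹ 0)) = nuMap x 0
    rw [show cf nu5 0 0 = 2 from by decide, show cf nu5 0 1 = 1 from by decide,
      show nu5⁻¹ (0 : Fin 5) = 1 from by decide, thetaF_eval_21]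
    simp [nuMap]
  · show mobZ (Mtab (cf nu5 1 0) (cf nu5 1 1)) (x (nu5⁻¹ 1)) = nuMap x 1
    rw [show cf nu5 1 0 = 2 from by decide, show cf nu5 1 1 = 1 from by decide,
      show nu5⁻¹ (1 : Fin 5) = 0 from by decide, thetaF_eval_21]
    simp [nuMap]
  · show mobZ (Mtab (cf nu5 2 0) (cf nu5 2 1)) (x (nu5⁻¹ 2)) = nuMap x 2
    rw [show cf nu5 2 0 = 1 from by decide, show cf nu5 2 1 = 0 from by decide,
      show nu5⁻¹ (2 : Fin 5) = 2 from by decide, thetaF_eval_10]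
    simp [nuMap]
  · show mobZ (Mtab (cf nu5 3 0) (cf nu5 3 1)) (x (nu5⁻¹ 3)) = nuMap x 3
    rw [show cf nu5 3 0 = 0 from by decide, show cf nu5 3 1 = 2 from by decide,
      show nu5⁻¹ (3 : Fin 5) = 3 from by decide, thetaF_eval_02]
    simp [nuMap]
  · show mobZ (Mtab (cf nu5 4 0) (cf nu5 4 1)) (x (nu5⁻¹ 4)) = nuMap x 4
    rw [show cf nu5 4 0 = 1 from by decide, show cf nu5 4 1 = 0 from by decide,
      show nu5⁻¹ (4 : Fin 5) = 4 from by decide, thetaF_eval_10]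
    simp [nuMap]

/-! ### Injectivity -/

lemma mobP_some (a b c d : ℚ) (y : QInf) : mobP a b c d (some y) ≠ none := by
  simp [mobP]

lemma rho_injective : Function.Injective rho := by
  rw [injective_iff_map_eq_one]
  intro p hp
  have hfix : ∀ m : Fin 5, p⁻¹ m = m := by
    intro m
    have hx := congrArg (fun (e : Equiv.Perm Phi5) => e (fun j => if j = m then emp else inf) m) hp
    simp only [Equiv.Perm.one_apply] at hx
    have hx' : thetaF (C p m) (if p⁻¹ m = m then emp else inf) = emp := by
      simpa [rho, rhoE, rhoFun, MonoidHom.mk'_apply] using hx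
    by_contra hne
    rw [if_neg hne] at hx'
    exact mobP_some _ _ _ _ none hx'
  have : p⁻¹ = 1 := Equiv.ext fun m => hfix m
  simpa using congrArg (·⁻¹) this

/-! ### The main theorem -/

/-- σ, τ, ν are bijections of Φ⁵ and there is an injective group homomorphism
ρ : S₅ → Perm(Φ⁵) with ρ((1 2 3 4 5)) = σ, ρ((1 5)(2 4)) = τ, ρ((1 2)) = ν; in
particular the subgroup generated by σ, τ, ν is (the image of ρ, hence) isomorphic
to S₅. -/
theorem sigma_tau_nu_generate_S5 :
    ∃ σE τE νE : Equiv.Perm Phi5, ⇑σE = sigmaMap ∧ ⇑τE = tauMap ∧ ⇑νE = nuMap ∧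
      ∃ ρ : Equiv.Perm (Fin 5) →* Equiv.Perm Phi5,
        Function.Injective ρ ∧
        ρ (finRotate 5) = σE ∧
        ρ (Equiv.swap 0 4 * Equiv.swap 1 3) = τE ∧
        ρ (Equiv.swap 0 1) = νE ∧
        Subgroup.closure ({σE, τE, νE} : Set (Equiv.Perm Phi5)) = ρ.range := by
  refine ⟨rho (finRotate 5), rho (Equiv.swap 0 4 * Equiv.swap 1 3), rho (Equiv.swap 0 1),
    rho_sigma, rho_tau, rho_nu, rho, rho_injective, rfl, rfl, rfl, ?_⟩
  have hswap : Equiv.swap (0 : Fin 5) (finRotate 5 0) = Equiv.swap 0 1 := by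
    rw [show finRotate 5 (0 : Fin 5) = 1 from by decide]
  have hgen : Subgroup.closure ({finRotate 5, Equiv.swap 0 1} : Set (Equiv.Perm (Fin 5))) = ⊤ := by
    rw [← hswap]
    exact Equiv.Perm.closure_cycle_adjacent_swap (isCycle_finRotate (n := 3))
      (support_finRotate (n := 3)) 0
  apply le_antisymm
  · rw [Subgroup.closure_le]
    rintro x (rfl | rfl | rfl)
    · exact ⟨finRotate 5, rfl⟩
    · exact ⟨Equiv.swap 0 4 * Equiv.swap 1 3, rfl⟩
    · exact ⟨Equiv.swap 0 1, rfl⟩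
  · rw [MonoidHom.range_eq_map, ← hgen, MonoidHom.map_closure]
    apply Subgroup.closure_mono
    rw [Set.image_insert_eq, Set.image_singleton]
    rintro x (rfl | rfl)
    · exact Set.mem_insert _ _
    · exact Set.mem_insert_of_mem _ (Set.mem_insert_of_mem _ rfl)
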